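/- If f : ℝⁿ → ℝ is (γ,μ)-strongly quasar-convex and L-smooth, then L ≥ γμ/(2−γ). -/

import Mathlib

open RealInnerProductSpace

set_option maxHeartbeats 1600000 in
theorem smoothness_vs_strong_quasar {n : ℕ} (hn : 0 < n)
    (f : EuclideanSpace ℝ (Fin n) → ℝ) (hdiff : Differentiable ℝ f)
    (γ μ : ℝ) (hγ : γ ∈ Set.Ioc (0:ℝ) 1) (hμ : 0 ≤ μ)
    (xstar : EuclideanSpace ℝ (Fin n)) (hmin : ∀ x, f xstar ≤ f x)
    (hquasar : ∀ x, f xstar ≥ f x + (1/γ) * ⟪gradient f x, xstar - x⟫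
      + (μ/2) * ‖xstar - x‖^2)
    (L : ℝ) (hsmooth : ∀ x y, ‖gradient f x - gradient f y‖ ≤ L * ‖x - y‖) :
    L ≥ γ * μ / (2 - γ) := by
  obtain ⟨hγ0, hγ1⟩ := hγ
  -- unit vector
  set v : EuclideanSpace ℝ (Fin n) := EuclideanSpace.single ⟨0, hn⟩ 1 with hv
  have hvnorm : ‖v‖ = 1 := by simp [hv]
  -- the curve
  set G : ℝ → EuclideanSpace ℝ (Fin n) := fun t => xstar + t • v with hG
  set g' : ℝ → ℝ := fun t => ⟪gradient f (G t), v⟫ with hg'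
  have hGd : ∀ t : ℝ, HasDerivAt G v t := by
    intro t
    have := (hasDerivAt_const t xstar).add ((hasDerivAt_id t).smul_const v)
    simp only [zero_add, one_smul, id] at this
    exact this
  have hgd : ∀ t : ℝ, HasDerivAt (fun t => f (G t)) (g' t) t := by
    intro t
    have h1 : HasGradientAt f (gradient f (G t)) (G t) := (hdiff (G t)).hasGradientAt
    have h2 : HasFDerivAt f (InnerProductSpace.toDual ℝ _ (gradient f (G t))) (G t) :=
      (hasGradientAt_iff_hasFDerivAt.mp h1)
    have := h2.comp_hasDerivAt t (hGd t)
    simpa [hg', real_inner_comm, Function.comp_def] using this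
  -- Lipschitz bound on g'
  have hg'lip : ∀ s t : ℝ, g' t - g' s ≤ L * |t - s| := by
    intro s t
    have h1 : g' t - g' s = ⟪gradient f (G t) - gradient f (G s), v⟫ := by
      simp [hg', inner_sub_left]
    rw [h1]
    calc ⟪gradient f (G t) - gradient f (G s), v⟫
        ≤ ‖gradient f (G t) - gradient f (G s)‖ * ‖v‖ := real_inner_le_norm _ _
      _ ≤ (L * ‖G t - G s‖) * 1 := by
          rw [hvnorm]; exact mul_le_mul_of_nonneg_right (hsmooth _ _) zero_le_one
      _ = L * |t - s| := by
          have : G t - G s = (t - s) • v := by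
            simp only [hG, sub_smul]; abel
          rw [mul_one, this, norm_smul, hvnorm, mul_one, Real.norm_eq_abs]
  have hg'cont : Continuous g' := by
    rw [Metric.continuous_iff]
    intro t ε hε
    rcases lt_or_ge L 0 with hL | hL
    · -- L < 0 : then gradient differences are ≤ negative, contradiction unless equal
      exact ⟨1, one_pos, fun s _ => by
        have h1 := hg'lip t s
        have h2 := hg'lip s t
        have h3 : ‖gradient f (G s) - gradient f (G t)‖ ≤ L * ‖G s - G t‖ := hsmooth _ _
        have h4 : (0:ℝ) ≤ ‖gradient f (G s) - gradient f (G t)‖ := norm_nonneg _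
        have h5 : L * ‖G s - G t‖ ≤ 0 :=
          mul_nonpos_of_nonpos_of_nonneg hL.le (norm_nonneg _)
        have h6 : gradient f (G s) - gradient f (G t) = 0 := by
          exact norm_eq_zero.mp (le_antisymm (h3.trans h5) h4)
        have h7 : g' s = g' t := by
          have : gradient f (G s) = gradient f (G t) := by
            have := sub_eq_zero.mp h6; exact this
          simp only [hg', this]
        simpa [Real.dist_eq, h7] using hε⟩
    · refine ⟨ε / (L + 1), by positivity, fun s hs => ?_⟩
      have h1 := hg'lip t s
      have h2 := hg'lip s t
      rw [Real.dist_eq] at hs ⊢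
      have habs : |s - t| < ε / (L + 1) := hs
      have h3 : |g' s - g' t| ≤ L * |s - t| := by
        rw [abs_le]
        constructor
        · have h1' := hg'lip s t
          rw [abs_sub_comm (t) (s)] at h1'
          linarith
        · have := hg'lip t s
          rw [abs_sub_comm (s) (t)] at this
          linarith
      have h4 : L * |s - t| < ε := by
        calc L * |s - t| ≤ (L+1) * |s - t| := by nlinarith [abs_nonneg (s - t)]
          _ < (L+1) * (ε / (L+1)) := by
              apply mul_lt_mul_of_pos_left habs; linarith
          _ = ε := by field_simp
      linarith [h3]
  -- FTC
  have hint : IntervalIntegrable g' MeasureTheory.volume 0 1 :=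
    hg'cont.intervalIntegrable 0 1
  have hftc : ∫ t in (0:ℝ)..1, g' t = f (G 1) - f (G 0) :=
    intervalIntegral.integral_eq_sub_of_hasDerivAt (fun t _ => hgd t) hint
  -- lower bound the integral
  have hlow : ∀ s ∈ Set.Icc (0:ℝ) 1, g' 1 - L * (1 - s) ≤ g' s := by
    intro s hs
    have h1 := hg'lip s 1
    have h2 : |1 - s| = 1 - s := abs_of_nonneg (by linarith [hs.2])
    rw [h2] at h1
    linarith
  have hintlb : g' 1 - L / 2 ≤ ∫ t in (0:ℝ)..1, g' t := by
    have h1 : (∫ s in (0:ℝ)..1, (g' 1 - L * (1 - s))) ≤ ∫ t in (0:ℝ)..1, g' t := by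
      apply intervalIntegral.integral_mono_on zero_le_one _ hint hlow
      exact ((continuous_const.sub (continuous_const.mul
        (continuous_const.sub continuous_id))).intervalIntegrable 0 1)
    have h2 : (∫ s in (0:ℝ)..1, (g' 1 - L * (1 - s))) = g' 1 - L / 2 := by
      have : (∫ s in (0:ℝ)..1, (g' 1 - L * (1 - s)))
          = (∫ s in (0:ℝ)..1, (g' 1 - L) + L * s) := by
        congr 1; funext s; ring
      rw [this, intervalIntegral.integral_add (intervalIntegrable_const)
        (((by fun_prop : Continuous fun s : ℝ => L * s)).intervalIntegrable 0 1),
        intervalIntegral.integral_const_mul, integral_id,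
        intervalIntegral.integral_const]
      simp
      ring
    linarith
  -- gradient at xstar is zero
  have hgrad0 : gradient f xstar = 0 := by
    have hlm : IsLocalMin f xstar := Filter.Eventually.of_forall hmin
    have : fderiv ℝ f xstar = 0 := hlm.fderiv_eq_zero
    simp [gradient, this]
  -- key quantities
  have hG1 : G 1 = xstar + v := by simp [hG]
  have hG0 : G 0 = xstar := by simp [hG]
  set I : ℝ := g' 1 with hI
  -- I ≤ L
  have hIL : I ≤ L := by
    have h1 : I = ⟪gradient f (G 1) - gradient f xstar, v⟫ := by
      simp [hI, hg', hgrad0, inner_sub_left]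
    rw [h1]
    calc ⟪gradient f (G 1) - gradient f xstar, v⟫
        ≤ ‖gradient f (G 1) - gradient f xstar‖ * ‖v‖ := real_inner_le_norm _ _
      _ ≤ (L * ‖G 1 - xstar‖) * 1 := by
          rw [hvnorm]; exact mul_le_mul_of_nonneg_right (hsmooth _ _) zero_le_one
      _ = L := by rw [hG1]; simp [hvnorm]
  -- descent: f x - f xstar ≥ I - L/2
  have hdesc : I - L / 2 ≤ f (G 1) - f xstar := by
    rw [← hG0]; linarith [hintlb, hftc.ge, hftc.le]
  -- quasar at G 1
  have hq := hquasar (G 1)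
  have hxs : xstar - G 1 = -v := by rw [hG1]; abel
  have hinner : ⟪gradient f (G 1), xstar - G 1⟫ = -I := by
    rw [hxs, inner_neg_right]
  have hnorm1 : ‖xstar - G 1‖ = 1 := by rw [hxs, norm_neg, hvnorm]
  rw [hinner, hnorm1] at hq
  -- hq : f xstar ≥ f (G 1) + (1/γ) * (-I) + (μ/2) * 1^2
  have hq' : f (G 1) - f xstar ≤ (1/γ) * I - μ/2 := by
    have : (1:ℝ)^2 = 1 := by norm_num
    rw [this] at hq
    linarith
  -- combine
  have hcomb : I - L/2 ≤ (1/γ) * I - μ/2 := le_trans hdesc hq'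
  have hcomb' : γ * I - γ * L / 2 ≤ I - γ * μ / 2 := by
    have h := mul_le_mul_of_nonneg_left hcomb hγ0.le
    have h2 : γ * (1/γ * I) = I := by field_simp
    nlinarith [h, h2]
  have hflip : (γ - 1) * L ≤ (γ - 1) * I :=
    mul_le_mul_of_nonpos_left hIL (by linarith)
  rw [ge_iff_le, div_le_iff₀ (by linarith : (0:ℝ) < 2 - γ)]
  nlinarith [hflip, hcomb']
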